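/- Let d ≥ 2, k > 0, f ∈ L²_loc(ℝ^d), and let n : ℝ^d → ℝ be bounded measurable. For R > 0 let D_R be the set of weak H¹ solutions of Δu + k² n² u = f in B_R, let d_R = inf { [u]_R : u ∈ D_R }, and let u_{B_R} be a minimizer of [·]_R over D_R. Then for any ρ > R > 0, [ u_{B_R} − u_{B_ρ} ]_R² ≤ 2 ( d_ρ² − d_R² ). -/

import Mathlib

open MeasureTheory Metric Complex Set
open scoped MeasureTheory ENNReal NNReal ComplexConjugate

noncomputable section

/-- Euclidean space `ℝ^d`. -/
abbrev Euc (d : ℕ) := EuclideanSpace ℝ (Fin d)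

/-- The `j`-th standard basis vector of `ℝ^d`. -/
def basisE (d : ℕ) (j : Fin d) : Euc d := EuclideanSpace.single j (1 : ℝ)

/-- The `j`-th partial derivative `∂_j u (x)` of a complex-valued function. -/
def pderiv' (d : ℕ) (u : Euc d → ℂ) (x : Euc d) (j : Fin d) : ℂ :=
  fderiv ℝ u x (basisE d j)

/-- The radial derivative `∂u/∂r (x) = ∇u(x) ⋅ x/|x|`. -/
def radialDeriv (d : ℕ) (u : Euc d → ℂ) (x : Euc d) : ℂ :=
  fderiv ℝ u x ((‖x‖⁻¹ : ℝ) • x)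

/-- The Laplacian `Δu = ∑_j ∂²_j u`. -/
def laplacian' (d : ℕ) (u : Euc d → ℂ) (x : Euc d) : ℂ :=
  ∑ j : Fin d, fderiv ℝ (fun y => fderiv ℝ u y (basisE d j)) x (basisE d j)

/-- The integrand `|∇u(x) − i k n(x) u(x) x/|x||² / (1+|x|)` of the radiation seminorm,
where the gradient is given by the (possibly distributional) datum `Du`. -/
def radIntegrand (d : ℕ) (k : ℝ) (n : Euc d → ℝ) (u : Euc d → ℂ)
    (Du : Euc d → Fin d → ℂ) (x : Euc d) : ℝ :=
  (∑ j : Fin d, ‖Du x j - Complex.I * (k : ℂ) * (n x : ℂ) * u x * ((x j / ‖x‖ : ℝ) : ℂ)‖ ^ 2) /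
    (1 + ‖x‖)

/-- The square `[u]²` of the radiation seminorm on a set `Ω`. -/
def radNormSq (d : ℕ) (k : ℝ) (n : Euc d → ℝ) (Ω : Set (Euc d)) (u : Euc d → ℂ)
    (Du : Euc d → Fin d → ℂ) : ℝ :=
  ∫ x in Ω, radIntegrand d k n u Du x

/-- The surface integral `∫_{∂B_ρ} F dσ` over the sphere of radius `ρ` centered at the origin,
with respect to the `(d−1)`-dimensional Hausdorff (surface) measure. -/
def sphereIntegral (d : ℕ) (ρ : ℝ) (F : Euc d → ℂ) : ℂ :=
  ∫ x in sphere (0 : Euc d) ρ, F x ∂(μH[(d : ℝ) - 1])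

/-- The spherical average `n_♯(r)` of `n` over the sphere `∂B_r`. -/
def nSharp (d : ℕ) (n : Euc d → ℝ) (r : ℝ) : ℝ :=
  ⨍ x in sphere (0 : Euc d) r, n x ∂(μH[(d : ℝ) - 1])

/-- `u ∈ H¹(Ω)` with distributional gradient `Du`: both are square integrable on `Ω` and `Du`
is the weak gradient of `u`, i.e. `∫ u ∂_jφ = −∫ (Du)_j φ` for all test functions `φ ∈ C¹_c(Ω)`. -/
def MemH1 (d : ℕ) (Ω : Set (Euc d)) (u : Euc d → ℂ) (Du : Euc d → Fin d → ℂ) : Prop :=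
  MemLp u 2 (volume.restrict Ω) ∧ MemLp Du 2 (volume.restrict Ω) ∧
    ∀ φ : Euc d → ℂ, ContDiff ℝ 1 φ → HasCompactSupport φ → tsupport φ ⊆ Ω →
      ∀ j : Fin d,
        ∫ x in Ω, u x * fderiv ℝ φ x (basisE d j) = - ∫ x in Ω, Du x j * φ x

/-- `(u, Du)` is a weak (variational) solution of `Δu + k² n² u = f` in `Ω`:
`−∫ ∇u ⋅ conj ∇φ + k² ∫ n² u conj φ = ∫ f conj φ` for all test functions `φ ∈ C¹_c(Ω)`. -/
def IsHelmSol (d : ℕ) (k : ℝ) (n : Euc d → ℝ) (f : Euc d → ℂ) (Ω : Set (Euc d))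
    (u : Euc d → ℂ) (Du : Euc d → Fin d → ℂ) : Prop :=
  ∀ φ : Euc d → ℂ, ContDiff ℝ 1 φ → HasCompactSupport φ → tsupport φ ⊆ Ω →
    (- ∫ x in Ω, ∑ j : Fin d, Du x j * conj (fderiv ℝ φ x (basisE d j)))
        + (k : ℂ) ^ 2 * ∫ x in Ω, ((n x : ℝ) : ℂ) ^ 2 * u x * conj (φ x)
      = ∫ x in Ω, f x * conj (φ x)

/-- The infimum `d_R = inf { [u]_R : u ∈ D_R }` of the radiation seminorm over the set `D_R` of
weak `H¹` solutions of the Helmholtz equation in the ball `B_R`. -/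
def helmInf (d : ℕ) (k : ℝ) (n : Euc d → ℝ) (f : Euc d → ℂ) (R : ℝ) : ℝ :=
  sInf {s : ℝ | ∃ u Du, MemH1 d (ball (0 : Euc d) R) u Du ∧
    IsHelmSol d k n f (ball (0 : Euc d) R) u Du ∧
    s = Real.sqrt (radNormSq d k n (ball (0 : Euc d) R) u Du)}

/-! ### Auxiliary lemmas -/

section Aux

lemma coord_le_norm {d : ℕ} (x : Euc d) (j : Fin d) : |x j| ≤ ‖x‖ := by
  rw [EuclideanSpace.norm_eq, ← Real.sqrt_sq_eq_abs]
  apply Real.sqrt_le_sqrt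
  have := Finset.single_le_sum (f := fun i => ‖x i‖ ^ 2) (fun i _ => by positivity)
    (Finset.mem_univ j)
  simpa [sq_abs] using this

lemma ratio_le_one {d : ℕ} (x : Euc d) (j : Fin d) : |x j / ‖x‖| ≤ 1 := by
  rcases eq_or_ne x 0 with rfl | hx
  · simp
  · rw [abs_div, abs_norm, div_le_one (norm_pos_iff.mpr hx)]
    exact coord_le_norm x j

lemma para_complex (a b : ℂ) : ‖a - b‖ ^ 2 + ‖a + b‖ ^ 2 = 2 * ‖a‖ ^ 2 + 2 * ‖b‖ ^ 2 := by
  simp only [Complex.sq_norm, Complex.normSq_apply, Complex.sub_re,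
    Complex.sub_im, Complex.add_re, Complex.add_im]
  ring

variable {d : ℕ} {k : ℝ} {n : Euc d → ℝ} {u v : Euc d → ℂ} {Du Dv : Euc d → Fin d → ℂ}

lemma radIntegrand_nonneg (x : Euc d) : 0 ≤ radIntegrand d k n u Du x :=
  div_nonneg (Finset.sum_nonneg fun _ _ => by positivity) (by positivity)

lemma radNormSq_nonneg (Ω : Set (Euc d)) : 0 ≤ radNormSq d k n Ω u Du :=
  integral_nonneg fun x => radIntegrand_nonneg x

/-- The `j`-th term of the radiation integrand. -/
def radTerm (d : ℕ) (k : ℝ) (n : Euc d → ℝ) (u : Euc d → ℂ) (Du : Euc d → Fin d → ℂ)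
    (j : Fin d) (x : Euc d) : ℂ :=
  Du x j - Complex.I * (k : ℂ) * (n x : ℂ) * u x * ((x j / ‖x‖ : ℝ) : ℂ)

lemma memℒp_radTerm {Ω : Set (Euc d)} (hn : Measurable n) {C : ℝ} (hC : ∀ x, |n x| ≤ C)
    (hu : MemLp u 2 (volume.restrict Ω)) (hDu : MemLp Du 2 (volume.restrict Ω)) (j : Fin d) :
    MemLp (radTerm d k n u Du j) 2 (volume.restrict Ω) := by
  have h1 : MemLp (fun x => Du x j) 2 (volume.restrict Ω) :=
    hDu.mono ((continuous_apply j).comp_aestronglyMeasurable hDu.1)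
      (Filter.Eventually.of_forall fun x => norm_le_pi_norm (Du x) j)
  have hrm : Measurable fun x : Euc d => ((x j / ‖x‖ : ℝ) : ℂ) :=
    Complex.measurable_ofReal.comp
      (((EuclideanSpace.proj j : Euc d →L[ℝ] ℝ).continuous.measurable).div
        continuous_norm.measurable)
  have hasm : AEStronglyMeasurable
      (fun x => Complex.I * (k : ℂ) * (n x : ℂ) * u x * ((x j / ‖x‖ : ℝ) : ℂ))
      (volume.restrict Ω) :=
    ((aestronglyMeasurable_const.mul
        (Complex.measurable_ofReal.comp hn).aestronglyMeasurable).mul hu.1).mul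
      hrm.aestronglyMeasurable
  have h2 : MemLp (fun x => Complex.I * (k : ℂ) * (n x : ℂ) * u x * ((x j / ‖x‖ : ℝ) : ℂ)) 2
      (volume.restrict Ω) := by
    refine (hu.const_mul ((|k| * C : ℝ) : ℂ)).mono hasm
      (Filter.Eventually.of_forall fun x => ?_)
    have hC0 : 0 ≤ C := le_trans (abs_nonneg _) (hC x)
    have e1 : ‖Complex.I * (k : ℂ) * (n x : ℂ) * u x * ((x j / ‖x‖ : ℝ) : ℂ)‖
        = |k| * |n x| * ‖u x‖ * |x j / ‖x‖| := by
      rw [norm_mul, norm_mul, norm_mul, norm_mul, Complex.norm_I, one_mul, Complex.norm_real,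
        Complex.norm_real, Complex.norm_real, Real.norm_eq_abs, Real.norm_eq_abs,
        Real.norm_eq_abs]
    have e2 : ‖((|k| * C : ℝ) : ℂ) * u x‖ = |k| * C * ‖u x‖ := by
      rw [norm_mul, Complex.norm_real, Real.norm_eq_abs, _root_.abs_of_nonneg (by positivity : (0:ℝ) ≤ |k| * C)]
    rw [e1, e2]
    calc |k| * |n x| * ‖u x‖ * |x j / ‖x‖| ≤ |k| * C * ‖u x‖ * 1 := by
          gcongr <;> [exact hC x; exact ratio_le_one x j]
      _ = |k| * C * ‖u x‖ := by ring
  exact h1.sub h2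

lemma integrable_sq_radTerm {Ω : Set (Euc d)} (hn : Measurable n) {C : ℝ} (hC : ∀ x, |n x| ≤ C)
    (hu : MemLp u 2 (volume.restrict Ω)) (hDu : MemLp Du 2 (volume.restrict Ω)) :
    Integrable (fun x => ∑ j : Fin d, ‖radTerm d k n u Du j x‖ ^ 2) (volume.restrict Ω) := by
  refine integrable_finset_sum _ fun j _ => ?_
  exact (memℒp_radTerm hn hC hu hDu j).norm.integrable_sq

set_option maxHeartbeats 1000000 in
lemma integrableOn_radIntegrand {Ω : Set (Euc d)} (hn : Measurable n) {C : ℝ}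
    (hC : ∀ x, |n x| ≤ C) (hu : MemLp u 2 (volume.restrict Ω))
    (hDu : MemLp Du 2 (volume.restrict Ω)) :
    IntegrableOn (radIntegrand d k n u Du) Ω := by
  have hsum := integrable_sq_radTerm (k := k) hn hC hu hDu
  have hmeas : AEStronglyMeasurable (radIntegrand d k n u Du) (volume.restrict Ω) := by
    have heq : radIntegrand d k n u Du
        = fun x => (∑ j : Fin d, ‖radTerm d k n u Du j x‖ ^ 2) / (1 + ‖x‖) := rfl
    rw [heq]
    have hden : AEStronglyMeasurable (fun x : Euc d => 1 + ‖x‖) (volume.restrict Ω) :=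
      (continuous_const.add continuous_norm).aestronglyMeasurable
    exact (hsum.1.aemeasurable.div hden.aemeasurable).aestronglyMeasurable
  refine hsum.mono' hmeas (Filter.Eventually.of_forall fun x => ?_)
  rw [Real.norm_eq_abs, _root_.abs_of_nonneg (radIntegrand_nonneg x)]
  exact div_le_self (Finset.sum_nonneg fun _ _ => by positivity)
    (by linarith [norm_nonneg x])

lemma radIntegrand_para (x : Euc d) :
    radIntegrand d k n (fun y => u y - v y) (fun y j => Du y j - Dv y j) x
      + radIntegrand d k n (fun y => u y + v y) (fun y j => Du y j + Dv y j) x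
    = 2 * radIntegrand d k n u Du x + 2 * radIntegrand d k n v Dv x := by
  simp only [radIntegrand]
  have hpos : (0:ℝ) < 1 + ‖x‖ := by linarith [norm_nonneg x]
  rw [← add_div]
  have key : (∑ j : Fin d,
        ‖(Du x j - Dv x j) - Complex.I * (k : ℂ) * (n x : ℂ) * (u x - v x)
            * ((x j / ‖x‖ : ℝ) : ℂ)‖ ^ 2)
      + (∑ j : Fin d,
        ‖(Du x j + Dv x j) - Complex.I * (k : ℂ) * (n x : ℂ) * (u x + v x)
            * ((x j / ‖x‖ : ℝ) : ℂ)‖ ^ 2)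
      = 2 * (∑ j : Fin d,
          ‖Du x j - Complex.I * (k : ℂ) * (n x : ℂ) * u x * ((x j / ‖x‖ : ℝ) : ℂ)‖ ^ 2)
        + 2 * (∑ j : Fin d,
          ‖Dv x j - Complex.I * (k : ℂ) * (n x : ℂ) * v x * ((x j / ‖x‖ : ℝ) : ℂ)‖ ^ 2) := by
    rw [← Finset.sum_add_distrib, Finset.mul_sum, Finset.mul_sum, ← Finset.sum_add_distrib]
    refine Finset.sum_congr rfl fun j _ => ?_
    set a := Du x j - Complex.I * (k : ℂ) * (n x : ℂ) * u x * ((x j / ‖x‖ : ℝ) : ℂ) with ha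
    set b := Dv x j - Complex.I * (k : ℂ) * (n x : ℂ) * v x * ((x j / ‖x‖ : ℝ) : ℂ) with hb
    have e1 : (Du x j - Dv x j) - Complex.I * (k : ℂ) * (n x : ℂ) * (u x - v x)
        * ((x j / ‖x‖ : ℝ) : ℂ) = a - b := by rw [ha, hb]; ring
    have e2 : (Du x j + Dv x j) - Complex.I * (k : ℂ) * (n x : ℂ) * (u x + v x)
        * ((x j / ‖x‖ : ℝ) : ℂ) = a + b := by rw [ha, hb]; ring
    rw [e1, e2]
    exact para_complex a b
  rw [key]
  ring

lemma radIntegrand_half (x : Euc d) :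
    radIntegrand d k n (fun y => (u y + v y) / 2) (fun y j => (Du y j + Dv y j) / 2) x
    = radIntegrand d k n (fun y => u y + v y) (fun y j => Du y j + Dv y j) x / 4 := by
  simp only [radIntegrand]
  have hs : (∑ j : Fin d, ‖(Du x j + Dv x j) / 2 - Complex.I * (k : ℂ) * (n x : ℂ)
        * ((u x + v x) / 2) * ((x j / ‖x‖ : ℝ) : ℂ)‖ ^ 2)
      = (∑ j : Fin d, ‖Du x j + Dv x j - Complex.I * (k : ℂ) * (n x : ℂ) * (u x + v x)
        * ((x j / ‖x‖ : ℝ) : ℂ)‖ ^ 2) / 4 := by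
    rw [Finset.sum_div]
    refine Finset.sum_congr rfl fun j _ => ?_
    have e1 : (Du x j + Dv x j) / 2 - Complex.I * (k : ℂ) * (n x : ℂ) * ((u x + v x) / 2)
        * ((x j / ‖x‖ : ℝ) : ℂ)
      = (Du x j + Dv x j - Complex.I * (k : ℂ) * (n x : ℂ) * (u x + v x)
          * ((x j / ‖x‖ : ℝ) : ℂ)) / 2 := by ring
    rw [e1, norm_div, div_pow]
    norm_num
  rw [hs, div_div, div_div, mul_comm (4:ℝ) (1 + ‖x‖)]

lemma memℒp_component {Ω : Set (Euc d)} (hDu : MemLp Du 2 (volume.restrict Ω)) (j : Fin d) :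
    MemLp (fun x => Du x j) 2 (volume.restrict Ω) :=
  hDu.mono ((continuous_apply j).comp_aestronglyMeasurable hDu.1)
    (Filter.Eventually.of_forall fun x => norm_le_pi_norm (Du x) j)

lemma radNormSq_para {Ω : Set (Euc d)} (hn : Measurable n) {C : ℝ} (hC : ∀ x, |n x| ≤ C)
    (hu : MemLp u 2 (volume.restrict Ω)) (hDu : MemLp Du 2 (volume.restrict Ω))
    (hv : MemLp v 2 (volume.restrict Ω)) (hDv : MemLp Dv 2 (volume.restrict Ω)) :
    radNormSq d k n Ω (fun y => u y - v y) (fun y j => Du y j - Dv y j)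
      + radNormSq d k n Ω (fun y => u y + v y) (fun y j => Du y j + Dv y j)
    = 2 * radNormSq d k n Ω u Du + 2 * radNormSq d k n Ω v Dv := by
  have hDsub : MemLp (fun y (j : Fin d) => Du y j - Dv y j) 2 (volume.restrict Ω) := hDu.sub hDv
  have hDadd : MemLp (fun y (j : Fin d) => Du y j + Dv y j) 2 (volume.restrict Ω) := hDu.add hDv
  have h1 : IntegrableOn
      (radIntegrand d k n (fun y => u y - v y) (fun y j => Du y j - Dv y j)) Ω :=
    integrableOn_radIntegrand (k := k) hn hC (hu.sub hv) hDsub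
  have h2 : IntegrableOn
      (radIntegrand d k n (fun y => u y + v y) (fun y j => Du y j + Dv y j)) Ω :=
    integrableOn_radIntegrand (k := k) hn hC (hu.add hv) hDadd
  have h3 := integrableOn_radIntegrand (k := k) hn hC hu hDu
  have h4 := integrableOn_radIntegrand (k := k) hn hC hv hDv
  unfold radNormSq
  rw [← integral_add h1 h2]
  calc (∫ x in Ω, (radIntegrand d k n (fun y => u y - v y) (fun y j => Du y j - Dv y j) x
          + radIntegrand d k n (fun y => u y + v y) (fun y j => Du y j + Dv y j) x))
      = ∫ x in Ω, (2 * radIntegrand d k n u Du x + 2 * radIntegrand d k n v Dv x) :=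
        integral_congr_ae (Filter.Eventually.of_forall fun x => radIntegrand_para x)
    _ = 2 * (∫ x in Ω, radIntegrand d k n u Du x) + 2 * ∫ x in Ω, radIntegrand d k n v Dv x := by
        rw [integral_add (h3.const_mul 2) (h4.const_mul 2), integral_const_mul, integral_const_mul]

lemma radNormSq_half {Ω : Set (Euc d)} :
    radNormSq d k n Ω (fun y => (u y + v y) / 2) (fun y j => (Du y j + Dv y j) / 2)
    = radNormSq d k n Ω (fun y => u y + v y) (fun y j => Du y j + Dv y j) / 4 := by
  unfold radNormSq
  rw [← integral_div]
  exact integral_congr_ae (Filter.Eventually.of_forall fun x => radIntegrand_half x)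

lemma memH1_mono {R ρ : ℝ} (hRρ : R ≤ ρ) (h : MemH1 d (ball (0 : Euc d) ρ) u Du) :
    MemH1 d (ball (0 : Euc d) R) u Du := by
  obtain ⟨h1, h2, h3⟩ := h
  have hsub : ball (0 : Euc d) R ⊆ ball (0 : Euc d) ρ := ball_subset_ball hRρ
  refine ⟨h1.mono_measure (Measure.restrict_mono hsub le_rfl),
    h2.mono_measure (Measure.restrict_mono hsub le_rfl), ?_⟩
  intro φ hφ1 hφ2 hφ3 j
  have e1 : ∫ x in ball (0 : Euc d) ρ, u x * fderiv ℝ φ x (basisE d j)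
      = ∫ x in ball (0 : Euc d) R, u x * fderiv ℝ φ x (basisE d j) := by
    refine setIntegral_eq_of_subset_of_forall_diff_eq_zero measurableSet_ball hsub fun x hx => ?_
    have hxn : x ∉ tsupport φ := fun hmem => hx.2 (hφ3 hmem)
    have hd0 : fderiv ℝ φ x = 0 :=
      Function.notMem_support.mp fun hs => hxn (support_fderiv_subset ℝ hs)
    simp [hd0]
  have e2 : ∫ x in ball (0 : Euc d) ρ, Du x j * φ x
      = ∫ x in ball (0 : Euc d) R, Du x j * φ x := by
    refine setIntegral_eq_of_subset_of_forall_diff_eq_zero measurableSet_ball hsub fun x hx => ?_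
    have hxn : x ∉ tsupport φ := fun hmem => hx.2 (hφ3 hmem)
    rw [image_eq_zero_of_notMem_tsupport hxn, mul_zero]
  rw [← e1, ← e2]
  exact h3 φ hφ1 hφ2 (hφ3.trans hsub) j

lemma isHelmSol_mono {f : Euc d → ℂ} {R ρ : ℝ} (hRρ : R ≤ ρ)
    (h : IsHelmSol d k n f (ball (0 : Euc d) ρ) u Du) :
    IsHelmSol d k n f (ball (0 : Euc d) R) u Du := by
  intro φ hφ1 hφ2 hφ3
  have hsub : ball (0 : Euc d) R ⊆ ball (0 : Euc d) ρ := ball_subset_ball hRρ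
  have key := h φ hφ1 hφ2 (hφ3.trans hsub)
  have e1 : ∫ x in ball (0 : Euc d) ρ, ∑ j : Fin d, Du x j * conj (fderiv ℝ φ x (basisE d j))
      = ∫ x in ball (0 : Euc d) R, ∑ j : Fin d, Du x j * conj (fderiv ℝ φ x (basisE d j)) := by
    refine setIntegral_eq_of_subset_of_forall_diff_eq_zero measurableSet_ball hsub fun x hx => ?_
    have hxn : x ∉ tsupport φ := fun hmem => hx.2 (hφ3 hmem)
    have hd0 : fderiv ℝ φ x = 0 :=
      Function.notMem_support.mp fun hs => hxn (support_fderiv_subset ℝ hs)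
    simp [hd0]
  have e2 : ∫ x in ball (0 : Euc d) ρ, ((n x : ℝ) : ℂ) ^ 2 * u x * conj (φ x)
      = ∫ x in ball (0 : Euc d) R, ((n x : ℝ) : ℂ) ^ 2 * u x * conj (φ x) := by
    refine setIntegral_eq_of_subset_of_forall_diff_eq_zero measurableSet_ball hsub fun x hx => ?_
    have hxn : x ∉ tsupport φ := fun hmem => hx.2 (hφ3 hmem)
    rw [image_eq_zero_of_notMem_tsupport hxn, map_zero, mul_zero]
  have e3 : ∫ x in ball (0 : Euc d) ρ, f x * conj (φ x)
      = ∫ x in ball (0 : Euc d) R, f x * conj (φ x) := by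
    refine setIntegral_eq_of_subset_of_forall_diff_eq_zero measurableSet_ball hsub fun x hx => ?_
    have hxn : x ∉ tsupport φ := fun hmem => hx.2 (hφ3 hmem)
    rw [image_eq_zero_of_notMem_tsupport hxn, map_zero, mul_zero]
  rw [← e1, ← e2, ← e3]
  exact key

lemma integrableOn_L2_mul_bdd {R : ℝ} {g ψ : Euc d → ℂ}
    (hg : MemLp g 2 (volume.restrict (ball (0 : Euc d) R)))
    (hψ : AEStronglyMeasurable ψ (volume.restrict (ball (0 : Euc d) R)))
    (hb : ∃ C, ∀ x, ‖ψ x‖ ≤ C) :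
    IntegrableOn (fun x => g x * ψ x) (ball (0 : Euc d) R) := by
  haveI : IsFiniteMeasure (volume.restrict (ball (0 : Euc d) R)) :=
    ⟨by rw [Measure.restrict_apply_univ]; exact measure_ball_lt_top⟩
  have hgi : Integrable g (volume.restrict (ball (0 : Euc d) R)) := hg.integrable one_le_two
  exact (hgi.bdd_mul hψ (Filter.Eventually.of_forall hb.choose_spec)).congr (Filter.Eventually.of_forall fun x => mul_comm _ _)

lemma test_deriv_cont {φ : Euc d → ℂ} (hφ1 : ContDiff ℝ 1 φ) (j : Fin d) :
    Continuous fun x => fderiv ℝ φ x (basisE d j) :=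
  (ContinuousLinearMap.apply ℝ ℂ (basisE d j)).continuous.comp
    (hφ1.continuous_fderiv one_ne_zero)

lemma test_deriv_bound {φ : Euc d → ℂ} (hφ1 : ContDiff ℝ 1 φ) (hφ2 : HasCompactSupport φ)
    (j : Fin d) : ∃ C, ∀ x, ‖fderiv ℝ φ x (basisE d j)‖ ≤ C := by
  obtain ⟨CD, hCD⟩ := (hφ2.fderiv (𝕜 := ℝ)).exists_bound_of_continuous
    (hφ1.continuous_fderiv one_ne_zero)
  refine ⟨CD * ‖basisE d j‖, fun x => ?_⟩
  exact ((fderiv ℝ φ x).le_opNorm (basisE d j)).trans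
    (mul_le_mul_of_nonneg_right (hCD x) (norm_nonneg _))

lemma memH1_mid {R : ℝ} (h1 : MemH1 d (ball (0 : Euc d) R) u Du)
    (h2 : MemH1 d (ball (0 : Euc d) R) v Dv) :
    MemH1 d (ball (0 : Euc d) R) (fun x => (u x + v x) / 2)
      (fun x j => (Du x j + Dv x j) / 2) := by
  obtain ⟨hu1, hu2, hu3⟩ := h1
  obtain ⟨hv1, hv2, hv3⟩ := h2
  have e1 : (fun x => (u x + v x) / 2) = fun x => ((2 : ℂ)⁻¹) * (u x + v x) := by
    funext x; ring
  have e2 : (fun x (j : Fin d) => (Du x j + Dv x j) / 2)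
      = ((2 : ℂ)⁻¹) • (Du + Dv) := by
    funext x j
    simp only [Pi.smul_apply, Pi.add_apply, smul_eq_mul]
    ring
  refine ⟨by rw [e1]; exact (hu1.add hv1).const_mul _,
    by rw [e2]; exact (hu2.add hv2).const_smul _, ?_⟩
  intro φ hφ1 hφ2 hφ3 j
  beta_reduce
  have hψa : AEStronglyMeasurable (fun x => fderiv ℝ φ x (basisE d j))
      (volume.restrict (ball (0 : Euc d) R)) := (test_deriv_cont hφ1 j).aestronglyMeasurable
  have hψb := test_deriv_bound hφ1 hφ2 j
  have hφa : AEStronglyMeasurable φ (volume.restrict (ball (0 : Euc d) R)) :=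
    hφ1.continuous.aestronglyMeasurable
  have hφb := hφ2.exists_bound_of_continuous hφ1.continuous
  have hIu : IntegrableOn (fun x => u x * fderiv ℝ φ x (basisE d j)) (ball (0 : Euc d) R) :=
    integrableOn_L2_mul_bdd hu1 hψa hψb
  have hIv : IntegrableOn (fun x => v x * fderiv ℝ φ x (basisE d j)) (ball (0 : Euc d) R) :=
    integrableOn_L2_mul_bdd hv1 hψa hψb
  have hIDu : IntegrableOn (fun x => Du x j * φ x) (ball (0 : Euc d) R) :=
    integrableOn_L2_mul_bdd (memℒp_component hu2 j) hφa hφb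
  have hIDv : IntegrableOn (fun x => Dv x j * φ x) (ball (0 : Euc d) R) :=
    integrableOn_L2_mul_bdd (memℒp_component hv2 j) hφa hφb
  have step1 : ∫ x in ball (0 : Euc d) R, ((u x + v x) / 2) * fderiv ℝ φ x (basisE d j)
      = (2 : ℂ)⁻¹ * ((∫ x in ball (0 : Euc d) R, u x * fderiv ℝ φ x (basisE d j))
          + ∫ x in ball (0 : Euc d) R, v x * fderiv ℝ φ x (basisE d j)) := by
    rw [← integral_add hIu hIv, ← integral_const_mul]
    exact integral_congr_ae (Filter.Eventually.of_forall fun x => by ring)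
  have step2 : ∫ x in ball (0 : Euc d) R, ((Du x j + Dv x j) / 2) * φ x
      = (2 : ℂ)⁻¹ * ((∫ x in ball (0 : Euc d) R, Du x j * φ x)
          + ∫ x in ball (0 : Euc d) R, Dv x j * φ x) := by
    rw [← integral_add hIDu hIDv, ← integral_const_mul]
    exact integral_congr_ae (Filter.Eventually.of_forall fun x => by ring)
  rw [step1, step2, hu3 φ hφ1 hφ2 hφ3 j, hv3 φ hφ1 hφ2 hφ3 j]
  ring

lemma isHelmSol_mid {f : Euc d → ℂ} {R : ℝ} (hn : Measurable n) {C : ℝ} (hC : ∀ x, |n x| ≤ C)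
    (h1 : MemH1 d (ball (0 : Euc d) R) u Du) (h2 : MemH1 d (ball (0 : Euc d) R) v Dv)
    (hs1 : IsHelmSol d k n f (ball (0 : Euc d) R) u Du)
    (hs2 : IsHelmSol d k n f (ball (0 : Euc d) R) v Dv) :
    IsHelmSol d k n f (ball (0 : Euc d) R) (fun x => (u x + v x) / 2)
      (fun x j => (Du x j + Dv x j) / 2) := by
  intro φ hφ1 hφ2 hφ3
  have E1 := hs1 φ hφ1 hφ2 hφ3
  have E2 := hs2 φ hφ1 hφ2 hφ3
  have hφa : AEStronglyMeasurable φ (volume.restrict (ball (0 : Euc d) R)) :=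
    hφ1.continuous.aestronglyMeasurable
  obtain ⟨Cφ, hCφ⟩ := hφ2.exists_bound_of_continuous hφ1.continuous
  have hGa : ∀ j : Fin d, AEStronglyMeasurable
      (fun x => (starRingEnd ℂ) (fderiv ℝ φ x (basisE d j)))
      (volume.restrict (ball (0 : Euc d) R)) := fun j =>
    (continuous_star.comp (test_deriv_cont hφ1 j)).aestronglyMeasurable
  have hGb : ∀ j : Fin d, ∃ CG, ∀ x, ‖(starRingEnd ℂ) (fderiv ℝ φ x (basisE d j))‖ ≤ CG := by
    intro j
    obtain ⟨CG, hCG⟩ := test_deriv_bound hφ1 hφ2 j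
    exact ⟨CG, fun x => by rw [RCLike.norm_conj]; exact hCG x⟩
  have hIGu : IntegrableOn
      (fun x => ∑ j : Fin d, Du x j * conj (fderiv ℝ φ x (basisE d j)))
      (ball (0 : Euc d) R) :=
    integrable_finset_sum _ fun j _ =>
      integrableOn_L2_mul_bdd (memℒp_component h1.2.1 j) (hGa j) (hGb j)
  have hIGv : IntegrableOn
      (fun x => ∑ j : Fin d, Dv x j * conj (fderiv ℝ φ x (basisE d j)))
      (ball (0 : Euc d) R) :=
    integrable_finset_sum _ fun j _ =>
      integrableOn_L2_mul_bdd (memℒp_component h2.2.1 j) (hGa j) (hGb j)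
  have hψa : AEStronglyMeasurable (fun x => ((n x : ℝ) : ℂ) ^ 2 * (starRingEnd ℂ) (φ x))
      (volume.restrict (ball (0 : Euc d) R)) :=
    (((Complex.measurable_ofReal.comp hn).pow_const 2).aestronglyMeasurable).mul
      (continuous_star.comp hφ1.continuous).aestronglyMeasurable
  have hψb : ∃ CP, ∀ x, ‖((n x : ℝ) : ℂ) ^ 2 * (starRingEnd ℂ) (φ x)‖ ≤ CP := by
    refine ⟨C ^ 2 * Cφ, fun x => ?_⟩
    have h0 : 0 ≤ Cφ := le_trans (norm_nonneg _) (hCφ x)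
    rw [norm_mul, norm_pow, Complex.norm_real, Real.norm_eq_abs, RCLike.norm_conj]
    have := hC x
    have := hCφ x
    have : |n x| ^ 2 ≤ C ^ 2 := by
      have := hC x
      nlinarith [abs_nonneg (n x)]
    nlinarith [abs_nonneg (n x), norm_nonneg (φ x), sq_nonneg (n x)]
  have hIPu : IntegrableOn (fun x => ((n x : ℝ) : ℂ) ^ 2 * u x * conj (φ x))
      (ball (0 : Euc d) R) :=
    (integrableOn_L2_mul_bdd h1.1 hψa hψb).congr
      (Filter.Eventually.of_forall fun x => by ring)
  have hIPv : IntegrableOn (fun x => ((n x : ℝ) : ℂ) ^ 2 * v x * conj (φ x))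
      (ball (0 : Euc d) R) :=
    (integrableOn_L2_mul_bdd h2.1 hψa hψb).congr
      (Filter.Eventually.of_forall fun x => by ring)
  have grad_mid : ∫ x in ball (0 : Euc d) R,
        ∑ j : Fin d, ((Du x j + Dv x j) / 2) * conj (fderiv ℝ φ x (basisE d j))
      = (2 : ℂ)⁻¹ * ((∫ x in ball (0 : Euc d) R,
            ∑ j : Fin d, Du x j * conj (fderiv ℝ φ x (basisE d j)))
          + ∫ x in ball (0 : Euc d) R,
            ∑ j : Fin d, Dv x j * conj (fderiv ℝ φ x (basisE d j))) := by
    rw [← integral_add hIGu hIGv, ← integral_const_mul]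
    refine integral_congr_ae (Filter.Eventually.of_forall fun x => ?_)
    beta_reduce
    rw [← Finset.sum_add_distrib, Finset.mul_sum]
    refine Finset.sum_congr rfl fun j _ => ?_
    ring
  have pot_mid : ∫ x in ball (0 : Euc d) R,
        ((n x : ℝ) : ℂ) ^ 2 * ((u x + v x) / 2) * conj (φ x)
      = (2 : ℂ)⁻¹ * ((∫ x in ball (0 : Euc d) R, ((n x : ℝ) : ℂ) ^ 2 * u x * conj (φ x))
          + ∫ x in ball (0 : Euc d) R, ((n x : ℝ) : ℂ) ^ 2 * v x * conj (φ x)) := by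
    rw [← integral_add hIPu hIPv, ← integral_const_mul]
    refine integral_congr_ae (Filter.Eventually.of_forall fun x => ?_)
    ring
  rw [grad_mid, pot_mid]
  linear_combination ((2 : ℂ)⁻¹) * E1 + ((2 : ℂ)⁻¹) * E2

end Aux

/-- For minimizers `u_{B_R}` of `[·]_R` over `D_R` and `u_{B_ρ}` of `[·]_ρ`
over `D_ρ` with `ρ > R > 0`, one has `[u_{B_R} − u_{B_ρ}]_R² ≤ 2 (d_ρ² − d_R²)`. -/
theorem statement10 (d : ℕ) (hd : 2 ≤ d) (k : ℝ) (hk : 0 < k)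
    (n : Euc d → ℝ) (hn_meas : Measurable n) (hn_bdd : ∃ C : ℝ, ∀ x, |n x| ≤ C)
    (f : Euc d → ℂ) (hf : ∀ R > (0 : ℝ), MemLp f 2 (volume.restrict (ball (0 : Euc d) R)))
    (R ρ : ℝ) (hR : 0 < R) (hRρ : R < ρ)
    (uR uρ : Euc d → ℂ) (DuR Duρ : Euc d → Fin d → ℂ)
    (huR : MemH1 d (ball (0 : Euc d) R) uR DuR)
    (huR' : IsHelmSol d k n f (ball (0 : Euc d) R) uR DuR)
    (huRmin : Real.sqrt (radNormSq d k n (ball (0 : Euc d) R) uR DuR) = helmInf d k n f R)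
    (huρ : MemH1 d (ball (0 : Euc d) ρ) uρ Duρ)
    (huρ' : IsHelmSol d k n f (ball (0 : Euc d) ρ) uρ Duρ)
    (huρmin : Real.sqrt (radNormSq d k n (ball (0 : Euc d) ρ) uρ Duρ) = helmInf d k n f ρ) :
    radNormSq d k n (ball (0 : Euc d) R)
        (fun x => uR x - uρ x) (fun x j => DuR x j - Duρ x j)
      ≤ 2 * ((helmInf d k n f ρ) ^ 2 - (helmInf d k n f R) ^ 2) := by
  obtain ⟨C, hC⟩ := hn_bdd
  have huρR : MemH1 d (ball (0 : Euc d) R) uρ Duρ := memH1_mono hRρ.le huρ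
  have huρR' : IsHelmSol d k n f (ball (0 : Euc d) R) uρ Duρ := isHelmSol_mono hRρ.le huρ'
  have hmidH1 := memH1_mid huR huρR
  have hmidSol := isHelmSol_mid hn_meas hC huR huρR huR' huρR'
  have hAnn : 0 ≤ radNormSq d k n (ball (0 : Euc d) R) uR DuR := radNormSq_nonneg _
  have hA : radNormSq d k n (ball (0 : Euc d) R) uR DuR = (helmInf d k n f R) ^ 2 := by
    rw [← huRmin, Real.sq_sqrt hAnn]
  have hBρ : radNormSq d k n (ball (0 : Euc d) ρ) uρ Duρ = (helmInf d k n f ρ) ^ 2 := by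
    rw [← huρmin, Real.sq_sqrt (radNormSq_nonneg _)]
  have hB : radNormSq d k n (ball (0 : Euc d) R) uρ Duρ ≤ (helmInf d k n f ρ) ^ 2 := by
    rw [← hBρ]
    unfold radNormSq
    exact setIntegral_mono_set (integrableOn_radIntegrand (k := k) hn_meas hC huρ.1 huρ.2.1)
      (Filter.Eventually.of_forall fun x => radIntegrand_nonneg x)
      (HasSubset.Subset.eventuallyLE (ball_subset_ball hRρ.le))
  have hMnn : 0 ≤ radNormSq d k n (ball (0 : Euc d) R)
      (fun x => (uR x + uρ x) / 2) (fun x j => (DuR x j + Duρ x j) / 2) := radNormSq_nonneg _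
  have hbdd : BddBelow {s : ℝ | ∃ u Du, MemH1 d (ball (0 : Euc d) R) u Du ∧
      IsHelmSol d k n f (ball (0 : Euc d) R) u Du ∧
      s = Real.sqrt (radNormSq d k n (ball (0 : Euc d) R) u Du)} := by
    refine ⟨0, fun s hs => ?_⟩
    obtain ⟨u', Du', _, _, rfl⟩ := hs
    exact Real.sqrt_nonneg _
  have hmem : Real.sqrt (radNormSq d k n (ball (0 : Euc d) R)
        (fun x => (uR x + uρ x) / 2) (fun x j => (DuR x j + Duρ x j) / 2))
      ∈ {s : ℝ | ∃ u Du, MemH1 d (ball (0 : Euc d) R) u Du ∧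
        IsHelmSol d k n f (ball (0 : Euc d) R) u Du ∧
        s = Real.sqrt (radNormSq d k n (ball (0 : Euc d) R) u Du)} :=
    ⟨_, _, hmidH1, hmidSol, rfl⟩
  have hinf_le : helmInf d k n f R ≤ Real.sqrt (radNormSq d k n (ball (0 : Euc d) R)
      (fun x => (uR x + uρ x) / 2) (fun x j => (DuR x j + Duρ x j) / 2)) := csInf_le hbdd hmem
  have hinf0 : 0 ≤ helmInf d k n f R := by
    rw [← huRmin]; exact Real.sqrt_nonneg _
  have hM_ge : (helmInf d k n f R) ^ 2 ≤ radNormSq d k n (ball (0 : Euc d) R)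
      (fun x => (uR x + uρ x) / 2) (fun x j => (DuR x j + Duρ x j) / 2) :=
    (pow_le_pow_left₀ hinf0 hinf_le 2).trans_eq (Real.sq_sqrt hMnn)
  have hpara := radNormSq_para (k := k) (Ω := ball (0 : Euc d) R) hn_meas hC
    huR.1 huR.2.1 huρR.1 huρR.2.1
  have hhalf := radNormSq_half (d := d) (k := k) (n := n) (Ω := ball (0 : Euc d) R)
    (u := uR) (v := uρ) (Du := DuR) (Dv := Duρ)
  linarith [hpara, hhalf, hA, hB, hM_ge]
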